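/- Define the abstraction α(p) of a multivariate polynomial p over X₁,…,Xₙ with natural coefficients as the vector in Values^{n+1} given by the recursive rules of iSAPP (constant c>1 ↦ A in the last coordinate; constant 0 or 1 ↦ 0-vector or L in last coordinate; Xᵢ ↦ L in coordinate i; αXᵢ with α>1 ↦ A in coordinate i; sums abstracted by sum of abstractions; products by M·α(q) ∪ M·α(r)). Then for two polynomials p, q, the abstraction of their coefficient-wise-max union equals the entrywise union of abstractions: α(p ⊔ q) = α(p) ∪ α(q). -/

import Mathlib

/-- The iSAPP algebra of abstract values: `0 < L < A < M`. -/
inductive Val : Type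
  | z | L | A | M
  deriving DecidableEq, Repr

instance : Fintype Val := ⟨{Val.z, Val.L, Val.A, Val.M}, fun x => by cases x <;> simp⟩

namespace Val

def toNat : Val → ℕ
  | z => 0 | L => 1 | A => 2 | M => 3

instance : LinearOrder Val := LinearOrder.lift' toNat (by decide)

/-- The iSAPP addition table: `0` neutral, `L+L = A`, `L+A = A+A = A`, `M` absorbing. -/
def add : Val → Val → Val
  | z, x => x
  | x, z => x
  | M, _ => M
  | _, M => M
  | L, L => A
  | L, A => A
  | A, L => A
  | A, A => A

/-- The iSAPP multiplication table: `0` absorbing, `L` neutral,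
`A×A = A`, `A×M = M×A = M×M = M`. -/
def mul : Val → Val → Val
  | z, _ => z
  | _, z => z
  | L, x => x
  | x, L => x
  | A, A => A
  | A, M => M
  | M, A => M
  | M, M => M

end Val

instance : Zero Val := ⟨Val.z⟩
instance : Add Val := ⟨Val.add⟩
instance : One Val := ⟨Val.L⟩
instance : Mul Val := ⟨Val.mul⟩

instance : CommSemiring Val where
  add := Val.add
  add_assoc := by decide
  zero := Val.z
  zero_add := by decide
  add_zero := by decide
  nsmul := nsmulRec
  add_comm := by decide
  mul := Val.mul
  left_distrib := by decide
  right_distrib := by decide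
  zero_mul := by decide
  mul_zero := by decide
  mul_assoc := by decide
  one := Val.L
  one_mul := by decide
  mul_one := by decide
  mul_comm := by decide

/-- Monomial-wise (coefficient-wise) maximum of two polynomials with ℕ coefficients. -/
noncomputable def pUnion {nv : ℕ} (p q : MvPolynomial (Fin nv) ℕ) :
    MvPolynomial (Fin nv) ℕ :=
  letI := Classical.decEq (Fin nv →₀ ℕ)
  ∑ m ∈ p.support ∪ q.support, MvPolynomial.monomial m (max (p.coeff m) (q.coeff m))

/-- Coefficient-wise order on polynomials. -/
def pLe {nv : ℕ} (p q : MvPolynomial (Fin nv) ℕ) : Prop :=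
  ∀ m, p.coeff m ≤ q.coeff m

open Classical in
/-- Abstraction of a single monomial `c·X^m` (as it appears in the canonical form):
a constant `c` contributes `L` (if `c = 1`) or `A` (if `c > 1`) to the last coordinate;
a degree-one monomial `c·Xᵢ` contributes `L` (if `c = 1`) or `A` (if `c > 1`) at
coordinate `i`; any other monomial contributes `M` at every involved coordinate
(the product rule `α(q·r) = M·α(q) ∪ M·α(r)`). -/
noncomputable def monoAbs {nv : ℕ} (m : Fin nv →₀ ℕ) (c : ℕ) : Fin (nv + 1) → Val :=
  fun i =>
    if h : (i : ℕ) < nv then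
      if m ⟨i, h⟩ = 0 then Val.z
      else if (m.sum fun _ e => e) = 1 then (if c = 1 then Val.L else Val.A)
      else Val.M
    else
      if m = 0 then (if c = 0 then Val.z else if c = 1 then Val.L else Val.A)
      else if (m.sum fun _ e => e) = 1 then Val.z
      else if 2 ≤ c then Val.M else Val.z

/-- Abstraction of a polynomial, as a vector in `Values^{n+1}`:
the sum (in the `Val` semiring) of the abstractions of its monomials. -/
noncomputable def polAbs {nv : ℕ} (p : MvPolynomial (Fin nv) ℕ) : Fin (nv + 1) → Val :=
  fun i => ∑ m ∈ p.support, monoAbs m (p.coeff m) i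


/-- Auxiliary: the `F` function, sending zero coefficients to `z`. -/
noncomputable def Fabs {nv : ℕ} (m : Fin nv →₀ ℕ) (c : ℕ) (i : Fin (nv + 1)) : Val :=
  if c = 0 then Val.z else monoAbs m c i

lemma val_z_le : ∀ t : Val, Val.z ≤ t := by decide

lemma val_add_zM : ∀ x y : Val, (x = Val.z ∨ x = Val.M) → (y = Val.z ∨ y = Val.M) →
    (x + y = Val.z ∨ x + y = Val.M) := by decide

lemma val_final4 : ∀ x y s t : Val, (s = Val.z ∨ s = Val.M) → (t = Val.z ∨ t = Val.M) →
    max x y + max s t = max (x + s) (y + t) := by decide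

lemma val_max_zM : ∀ x y : Val, (x = Val.z ∨ x = Val.M) → (y = Val.z ∨ y = Val.M) →
    (max x y = Val.z ∨ max x y = Val.M) := by decide

lemma monoAbs_le {nv : ℕ} (m : Fin nv →₀ ℕ) (i : Fin (nv + 1)) {a b : ℕ}
    (ha : a ≠ 0) (hab : a ≤ b) : monoAbs m a i ≤ monoAbs m b i := by
  unfold monoAbs
  split_ifs <;> first | rfl | decide | omega

lemma Fabs_mono {nv : ℕ} (m : Fin nv →₀ ℕ) (i : Fin (nv + 1)) :
    Monotone fun c => Fabs m c i := by
  intro a b hab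
  unfold Fabs
  by_cases ha : a = 0
  · simp only [ha, if_pos rfl]
    exact val_z_le _
  · have hb : b ≠ 0 := by omega
    simp only [if_neg ha, if_neg hb]
    exact monoAbs_le m i ha hab

lemma Fabs_max {nv : ℕ} (m : Fin nv →₀ ℕ) (i : Fin (nv + 1)) (a b : ℕ) :
    Fabs m (max a b) i = max (Fabs m a i) (Fabs m b i) :=
  (Fabs_mono m i).map_max

lemma deg_one_eq_single {nv : ℕ} {m : Fin nv →₀ ℕ} (h : (m.sum fun _ e => e) = 1)
    {j : Fin nv} (hj : m j ≠ 0) : m = Finsupp.single j 1 := by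
  have hsum : ∑ x ∈ m.support, m x = 1 := h
  have hjm : j ∈ m.support := Finsupp.mem_support_iff.2 hj
  have hsplit : m j + ∑ x ∈ m.support.erase j, m x = 1 := by
    rw [Finset.add_sum_erase _ _ hjm]; exact hsum
  have hmj : m j = 1 := by omega
  have hrest : ∑ x ∈ m.support.erase j, m x = 0 := by omega
  ext k
  by_cases hk : k = j
  · subst hk; simp [hmj]
  · have : m k = 0 := by
      by_contra hne
      have hkm : k ∈ m.support.erase j :=
        Finset.mem_erase.2 ⟨hk, Finsupp.mem_support_iff.2 hne⟩
      have := (Finset.sum_eq_zero_iff.1 hrest) k hkm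
      exact hne this
    simp [this, Finsupp.single_apply, Ne.symm hk]

lemma val_sum_zM {β : Type*} [DecidableEq β] {S : Finset β} {u : β → Val}
    (hu : ∀ m ∈ S, u m = Val.z ∨ u m = Val.M) :
    (∑ m ∈ S, u m) = Val.z ∨ (∑ m ∈ S, u m) = Val.M := by
  induction S using Finset.induction_on with
  | empty => left; rfl
  | @insert a S ha ih =>
    rw [Finset.sum_insert ha]
    exact val_add_zM _ _ (hu a (Finset.mem_insert_self a S))
      (ih fun m hm => hu m (Finset.mem_insert_of_mem hm))

lemma val_sum_max {β : Type*} [DecidableEq β] {S : Finset β} {u v : β → Val}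
    (hu : ∀ m ∈ S, u m = Val.z ∨ u m = Val.M)
    (hv : ∀ m ∈ S, v m = Val.z ∨ v m = Val.M) :
    (∑ m ∈ S, max (u m) (v m)) = max (∑ m ∈ S, u m) (∑ m ∈ S, v m) := by
  induction S using Finset.induction_on with
  | empty => simp
  | @insert a S ha ih =>
    have hu' : ∀ m ∈ S, u m = Val.z ∨ u m = Val.M :=
      fun m hm => hu m (Finset.mem_insert_of_mem hm)
    have hv' : ∀ m ∈ S, v m = Val.z ∨ v m = Val.M :=
      fun m hm => hv m (Finset.mem_insert_of_mem hm)
    rw [Finset.sum_insert ha, Finset.sum_insert ha, Finset.sum_insert ha, ih hu' hv']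
    exact val_final4 _ _ _ _ (val_sum_zM hu') (val_sum_zM hv')

lemma key_sum {nv : ℕ} (i : Fin (nv + 1)) (m0 : Fin nv →₀ ℕ)
    (hzM : ∀ (m : Fin nv →₀ ℕ) (c : ℕ), m ≠ m0 →
      Fabs m c i = Val.z ∨ Fabs m c i = Val.M)
    (T : Finset (Fin nv →₀ ℕ)) (a b : (Fin nv →₀ ℕ) → ℕ) :
    ∑ m ∈ T, Fabs m (max (a m) (b m)) i
      = max (∑ m ∈ T, Fabs m (a m) i) (∑ m ∈ T, Fabs m (b m) i) := by
  classical
  by_cases hm0 : m0 ∈ T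
  · rw [← Finset.add_sum_erase _ _ hm0, ← Finset.add_sum_erase _ (fun m => Fabs m (a m) i) hm0,
      ← Finset.add_sum_erase _ (fun m => Fabs m (b m) i) hm0]
    have hErase : ∀ g : (Fin nv →₀ ℕ) → ℕ, ∀ m ∈ T.erase m0,
        Fabs m (g m) i = Val.z ∨ Fabs m (g m) i = Val.M :=
      fun g m hm => hzM m (g m) (Finset.mem_erase.1 hm).1
    have h1 : ∑ m ∈ T.erase m0, Fabs m (max (a m) (b m)) i
        = max (∑ m ∈ T.erase m0, Fabs m (a m) i) (∑ m ∈ T.erase m0, Fabs m (b m) i) := by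
      rw [Finset.sum_congr rfl fun m _ => Fabs_max m i (a m) (b m)]
      exact val_sum_max (hErase a) (hErase b)
    rw [h1, Fabs_max]
    exact val_final4 _ _ _ _ (val_sum_zM (hErase a)) (val_sum_zM (hErase b))
  · have hAll : ∀ g : (Fin nv →₀ ℕ) → ℕ, ∀ m ∈ T,
        Fabs m (g m) i = Val.z ∨ Fabs m (g m) i = Val.M :=
      fun g m hm => hzM m (g m) (by rintro rfl; exact hm0 hm)
    rw [Finset.sum_congr rfl fun m _ => Fabs_max m i (a m) (b m)]
    exact val_sum_max (hAll a) (hAll b)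

/-- Lemma `polysum` of iSAPP: the abstraction of a coefficient-wise-max union of two
polynomials is the entrywise union (max) of their abstractions. -/
theorem isapp_polAbs_pUnion {nv : ℕ} (p q : MvPolynomial (Fin nv) ℕ) :
    polAbs (pUnion p q) = fun i => max (polAbs p i) (polAbs q i) := by
  classical
  funext i
  have hcoeff : ∀ m, (pUnion p q).coeff m = max (p.coeff m) (q.coeff m) := by
    intro m
    unfold pUnion
    rw [MvPolynomial.coeff_sum]
    simp only [MvPolynomial.coeff_monomial]
    simp only [Finset.sum_ite_eq', Finset.mem_union]
    by_cases hm : m ∈ p.support ∨ m ∈ q.support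
    · rw [if_pos hm]
    · rw [if_neg hm]
      rw [not_or] at hm
      rw [MvPolynomial.notMem_support_iff.1 hm.1, MvPolynomial.notMem_support_iff.1 hm.2]
      rfl
  have hsupp : (pUnion p q).support = p.support ∪ q.support := by
    ext m
    rw [MvPolynomial.mem_support_iff, hcoeff, Finset.mem_union,
      MvPolynomial.mem_support_iff, MvPolynomial.mem_support_iff]
    omega
  set U := p.support ∪ q.support with hU
  -- rewrite each polAbs as a sum of Fabs over U
  have hsub : ∀ (r : MvPolynomial (Fin nv) ℕ), r.support ⊆ U →
      polAbs r i = ∑ m ∈ U, Fabs m (r.coeff m) i := by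
    intro r hr
    unfold polAbs
    have h1 : ∑ m ∈ r.support, monoAbs m (r.coeff m) i
        = ∑ m ∈ r.support, Fabs m (r.coeff m) i :=
      Finset.sum_congr rfl fun m hm => by
        unfold Fabs; rw [if_neg (MvPolynomial.mem_support_iff.1 hm)]
    rw [h1]
    exact Finset.sum_subset hr fun m _ hm => by
      unfold Fabs; rw [MvPolynomial.notMem_support_iff.1 hm, if_pos rfl]; rfl
  have hL : polAbs (pUnion p q) i = ∑ m ∈ U, Fabs m (max (p.coeff m) (q.coeff m)) i := by
    rw [hsub (pUnion p q) (le_of_eq hsupp)]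
    exact Finset.sum_congr rfl fun m _ => by rw [hcoeff]
  rw [hL, hsub p Finset.subset_union_left, hsub q Finset.subset_union_right]
  -- now apply the key lemma, with the appropriate special monomial m0
  by_cases hi : (i : ℕ) < nv
  · refine key_sum i (Finsupp.single ⟨(i : ℕ), hi⟩ 1) ?_ U _ _
    intro m c hm
    unfold Fabs monoAbs
    by_cases hc : c = 0
    · left; rw [if_pos hc]
    rw [if_neg hc, dif_pos hi]
    by_cases h1 : m ⟨(i : ℕ), hi⟩ = 0
    · left; rw [if_pos h1]
    rw [if_neg h1]
    by_cases h2 : (m.sum fun _ e => e) = 1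
    · exact absurd (deg_one_eq_single h2 h1) hm
    · right; rw [if_neg h2]
  · refine key_sum i 0 ?_ U _ _
    intro m c hm
    unfold Fabs monoAbs
    by_cases hc : c = 0
    · left; rw [if_pos hc]
    rw [if_neg hc, dif_neg hi, if_neg hm]
    by_cases h2 : (m.sum fun _ e => e) = 1
    · left; rw [if_pos h2]
    rw [if_neg h2]
    by_cases h3 : 2 ≤ c
    · right; rw [if_pos h3]
    · left; rw [if_neg h3]
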